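/- (Theorem 1, Essential Uniqueness.) For any given incentive profile u, if f and f̄ are both Wardrop equilibrium flows of a routing game with path-specific node costs (edge and base node costs nonnegative, continuous, nondecreasing), then their social costs coincide: C(f,u) = C(f̄,u). -/
import Mathlib


open Set MeasureTheory intervalIntegral

section RoutingGame

variable {E V P : Type*} [Fintype E] [Fintype V] [Fintype P] [Nonempty P]
  [DecidableEq E] [DecidableEq V]

/-- Edge flow: total flow of paths containing edge `e`. -/
noncomputable def edgeFlow (pathE : P → Finset E) (f : P → ℝ) (e : E) : ℝ :=
  ∑ p ∈ Finset.univ.filter (fun p => e ∈ pathE p), f p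

/-- Node flow: total flow of paths containing node `v`. -/
noncomputable def nodeFlow (pathV : P → Finset V) (f : P → ℝ) (v : V) : ℝ :=
  ∑ p ∈ Finset.univ.filter (fun p => v ∈ pathV p), f p

/-- Feasible flows: nonnegative, summing to one. -/
def Feasible (f : P → ℝ) : Prop := (∀ p, 0 ≤ f p) ∧ ∑ p, f p = 1

/-- Path cost with additive path-specific node incentives. -/
noncomputable def pathCost (pathE : P → Finset E) (pathV : P → Finset V)
    (ce : E → ℝ → ℝ) (cv : V → ℝ → ℝ) (u : V → P → ℝ) (f : P → ℝ) (p : P) : ℝ :=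
  (∑ e ∈ pathE p, ce e (edgeFlow pathE f e)) +
  (∑ v ∈ pathV p, (cv v (nodeFlow pathV f v) + u v p))

/-- Wardrop equilibrium: every used path has minimal cost. -/
def IsWardrop (pathE : P → Finset E) (pathV : P → Finset V)
    (ce : E → ℝ → ℝ) (cv : V → ℝ → ℝ) (u : V → P → ℝ) (f : P → ℝ) : Prop :=
  ∀ p q : P, 0 < f p →
    pathCost pathE pathV ce cv u f p ≤ pathCost pathE pathV ce cv u f q

/-- The potential function `Φ(f,u)`. -/
noncomputable def potential (pathE : P → Finset E) (pathV : P → Finset V)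
    (ce : E → ℝ → ℝ) (cv : V → ℝ → ℝ) (u : V → P → ℝ) (f : P → ℝ) : ℝ :=
  (∑ e, ∫ s in (0:ℝ)..(edgeFlow pathE f e), ce e s) +
  (∑ v, ∫ s in (0:ℝ)..(nodeFlow pathV f v), cv v s) +
  (∑ p, f p * ∑ v ∈ pathV p, u v p)

/-- Social cost. -/
noncomputable def socialCost (pathE : P → Finset E) (pathV : P → Finset V)
    (ce : E → ℝ → ℝ) (cv : V → ℝ → ℝ) (u : V → P → ℝ) (f : P → ℝ) : ℝ :=
  ∑ p, f p * pathCost pathE pathV ce cv u f p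

lemma sum_incidence_swap (pathE : P → Finset E) (g : P → ℝ) (d : E → ℝ) :
    ∑ p, g p * ∑ e ∈ pathE p, d e
      = ∑ e, (∑ p ∈ Finset.univ.filter (fun p => e ∈ pathE p), g p) * d e := by
  simp_rw [Finset.mul_sum, Finset.sum_mul, Finset.sum_filter]
  rw [Finset.sum_comm]
  congr 1; ext p
  rw [← Finset.sum_filter]
  congr 1
  simp [Finset.filter_mem_eq_inter]

lemma edgeFlow_mem_Icc (pathE : P → Finset E) {f : P → ℝ} (hf : Feasible f) (e : E) :
    edgeFlow pathE f e ∈ Set.Icc (0:ℝ) 1 := by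
  constructor
  · exact Finset.sum_nonneg fun p _ => hf.1 p
  · rw [← hf.2]
    exact Finset.sum_le_sum_of_subset_of_nonneg (Finset.filter_subset _ _)
      (fun p _ _ => hf.1 p)

/-- At a Wardrop equilibrium there is a common cost `m` on used paths,
which lower-bounds all path costs, and equals the social cost. -/
lemma wardrop_common_cost (pathE : P → Finset E) (pathV : P → Finset V)
    (ce : E → ℝ → ℝ) (cv : V → ℝ → ℝ) (u : V → P → ℝ)
    {f : P → ℝ} (hf : Feasible f)
    (heq : IsWardrop pathE pathV ce cv u f) :
    ∃ m : ℝ, (∀ q, m ≤ pathCost pathE pathV ce cv u f q) ∧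
      (∀ p, 0 < f p → pathCost pathE pathV ce cv u f p = m) ∧
      socialCost pathE pathV ce cv u f = m := by
  have hex : ∃ p, 0 < f p := by
    by_contra h
    push_neg at h
    have hz : ∀ p, f p = 0 := fun p => le_antisymm (h p) (hf.1 p)
    have : (1:ℝ) = 0 := by rw [← hf.2]; simp [hz]
    norm_num at this
  obtain ⟨p0, hp0⟩ := hex
  refine ⟨pathCost pathE pathV ce cv u f p0, fun q => heq p0 q hp0, ?_, ?_⟩
  · intro p hp
    exact le_antisymm (heq p p0 hp) (heq p0 p hp0)
  · have key : ∀ p, f p * pathCost pathE pathV ce cv u f p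
        = f p * pathCost pathE pathV ce cv u f p0 := by
      intro p
      rcases eq_or_lt_of_le (hf.1 p) with h | h
      · rw [← h]; ring
      · rw [le_antisymm (heq p p0 h) (heq p0 p hp0)]
    unfold socialCost
    simp_rw [key, ← Finset.sum_mul, hf.2, one_mul]

/-- **Theorem 1, Essential Uniqueness.** Any two Wardrop equilibrium flows
have the same social cost. -/
theorem wardrop_socialCost_unique
    (pathE : P → Finset E) (pathV : P → Finset V)
    (ce : E → ℝ → ℝ) (cv : V → ℝ → ℝ) (u : V → P → ℝ)
    (hce_nn : ∀ e, ∀ x ∈ Set.Icc (0:ℝ) 1, 0 ≤ ce e x)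
    (hce_cont : ∀ e, ContinuousOn (ce e) (Set.Icc (0:ℝ) 1))
    (hce_mono : ∀ e, MonotoneOn (ce e) (Set.Icc (0:ℝ) 1))
    (hcv_nn : ∀ v, ∀ x ∈ Set.Icc (0:ℝ) 1, 0 ≤ cv v x)
    (hcv_cont : ∀ v, ContinuousOn (cv v) (Set.Icc (0:ℝ) 1))
    (hcv_mono : ∀ v, MonotoneOn (cv v) (Set.Icc (0:ℝ) 1))
    (f fbar : P → ℝ) (hf : Feasible f) (hfbar : Feasible fbar)
    (heqf : IsWardrop pathE pathV ce cv u f)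
    (heqfbar : IsWardrop pathE pathV ce cv u fbar) :
    socialCost pathE pathV ce cv u f = socialCost pathE pathV ce cv u fbar := by
  classical
  obtain ⟨m, hm_le, hm_used, hm_C⟩ := wardrop_common_cost pathE pathV ce cv u hf heqf
  obtain ⟨mb, hmb_le, hmb_used, hmb_C⟩ := wardrop_common_cost pathE pathV ce cv u hfbar heqfbar
  set cp := pathCost pathE pathV ce cv u f with hcp
  set cpb := pathCost pathE pathV ce cv u fbar with hcpb
  -- VI inequalities
  have h1 : m ≤ ∑ p, fbar p * cp p := by
    calc m = ∑ p, fbar p * m := by rw [← Finset.sum_mul, hfbar.2, one_mul]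
    _ ≤ ∑ p, fbar p * cp p :=
      Finset.sum_le_sum fun p _ => mul_le_mul_of_nonneg_left (hm_le p) (hfbar.1 p)
  have h2 : mb ≤ ∑ p, f p * cpb p := by
    calc mb = ∑ p, f p * mb := by rw [← Finset.sum_mul, hf.2, one_mul]
    _ ≤ ∑ p, f p * cpb p :=
      Finset.sum_le_sum fun p _ => mul_le_mul_of_nonneg_left (hmb_le p) (hf.1 p)
  -- S := ∑ (f - fbar)(cp - cpb) ≤ 0
  have hS_le : ∑ p, (f p - fbar p) * (cp p - cpb p) ≤ 0 := by
    have : ∑ p, (f p - fbar p) * (cp p - cpb p)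
        = (∑ p, f p * cp p - ∑ p, fbar p * cp p)
          + (∑ p, fbar p * cpb p - ∑ p, f p * cpb p) := by
      simp_rw [sub_mul, mul_sub, Finset.sum_sub_distrib]
      ring
    rw [this]
    have e1 : ∑ p, f p * cp p = m := hm_C
    have e2 : ∑ p, fbar p * cpb p = mb := hmb_C
    rw [e1, e2]
    linarith
  -- decompose S over edges and nodes
  have hdecomp : ∑ p, (f p - fbar p) * (cp p - cpb p)
      = (∑ e, (edgeFlow pathE f e - edgeFlow pathE fbar e)
            * (ce e (edgeFlow pathE f e) - ce e (edgeFlow pathE fbar e)))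
        + (∑ v, (nodeFlow pathV f v - nodeFlow pathV fbar v)
            * (cv v (nodeFlow pathV f v) - cv v (nodeFlow pathV fbar v))) := by
    have hcpdiff : ∀ p, cp p - cpb p
        = (∑ e ∈ pathE p, (ce e (edgeFlow pathE f e) - ce e (edgeFlow pathE fbar e)))
          + (∑ v ∈ pathV p, (cv v (nodeFlow pathV f v) - cv v (nodeFlow pathV fbar v))) := by
      intro p
      simp only [hcp, hcpb, pathCost, Finset.sum_sub_distrib, Finset.sum_add_distrib]
      ring
    simp_rw [hcpdiff, mul_add, Finset.sum_add_distrib]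
    rw [sum_incidence_swap pathE, sum_incidence_swap pathV]
    congr 1
    · exact Finset.sum_congr rfl fun e _ => by
        rw [Finset.sum_sub_distrib]; rfl
    · exact Finset.sum_congr rfl fun v _ => by
        rw [Finset.sum_sub_distrib]; rfl
  -- each summand nonneg
  have hterm_e : ∀ e : E, 0 ≤ (edgeFlow pathE f e - edgeFlow pathE fbar e)
      * (ce e (edgeFlow pathE f e) - ce e (edgeFlow pathE fbar e)) := by
    intro e
    have h1 := edgeFlow_mem_Icc pathE hf e
    have h2 := edgeFlow_mem_Icc pathE hfbar e
    rcases le_total (edgeFlow pathE fbar e) (edgeFlow pathE f e) with h | h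
    · exact mul_nonneg (by linarith) (by linarith [hce_mono e h2 h1 h])
    · nlinarith [hce_mono e h1 h2 h]
  have hterm_v : ∀ v : V, 0 ≤ (nodeFlow pathV f v - nodeFlow pathV fbar v)
      * (cv v (nodeFlow pathV f v) - cv v (nodeFlow pathV fbar v)) := by
    intro v
    have h1 : nodeFlow pathV f v ∈ Set.Icc (0:ℝ) 1 := edgeFlow_mem_Icc pathV hf v
    have h2 : nodeFlow pathV fbar v ∈ Set.Icc (0:ℝ) 1 := edgeFlow_mem_Icc pathV hfbar v
    rcases le_total (nodeFlow pathV fbar v) (nodeFlow pathV f v) with h | h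
    · exact mul_nonneg (by linarith) (by linarith [hcv_mono v h2 h1 h])
    · nlinarith [hcv_mono v h1 h2 h]
  have hS_nn : 0 ≤ ∑ p, (f p - fbar p) * (cp p - cpb p) := by
    rw [hdecomp]
    exact add_nonneg (Finset.sum_nonneg fun e _ => hterm_e e)
      (Finset.sum_nonneg fun v _ => hterm_v v)
  have hS0 : ∑ p, (f p - fbar p) * (cp p - cpb p) = 0 := le_antisymm hS_le hS_nn
  -- hence each edge/node term is zero
  have hsum0 : (∑ e, (edgeFlow pathE f e - edgeFlow pathE fbar e)
        * (ce e (edgeFlow pathE f e) - ce e (edgeFlow pathE fbar e)))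
      + (∑ v, (nodeFlow pathV f v - nodeFlow pathV fbar v)
        * (cv v (nodeFlow pathV f v) - cv v (nodeFlow pathV fbar v))) = 0 := by
    rw [← hdecomp]; exact hS0
  have hsum_e0 : ∑ e, (edgeFlow pathE f e - edgeFlow pathE fbar e)
        * (ce e (edgeFlow pathE f e) - ce e (edgeFlow pathE fbar e)) = 0 := by
    have hA := Finset.sum_nonneg (fun e (_ : e ∈ Finset.univ) => hterm_e e)
    have hB := Finset.sum_nonneg (fun v (_ : v ∈ Finset.univ) => hterm_v v)
    linarith
  have hsum_v0 : ∑ v, (nodeFlow pathV f v - nodeFlow pathV fbar v)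
        * (cv v (nodeFlow pathV f v) - cv v (nodeFlow pathV fbar v)) = 0 := by
    have hA := Finset.sum_nonneg (fun e (_ : e ∈ Finset.univ) => hterm_e e)
    have hB := Finset.sum_nonneg (fun v (_ : v ∈ Finset.univ) => hterm_v v)
    linarith
  have hce_eq : ∀ e, ce e (edgeFlow pathE f e) = ce e (edgeFlow pathE fbar e) := by
    intro e
    have h0 : (edgeFlow pathE f e - edgeFlow pathE fbar e)
        * (ce e (edgeFlow pathE f e) - ce e (edgeFlow pathE fbar e)) = 0 :=
      (Finset.sum_eq_zero_iff_of_nonneg (fun e _ => hterm_e e)).mp hsum_e0 e (Finset.mem_univ e)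
    rcases mul_eq_zero.mp h0 with h | h
    · have : edgeFlow pathE f e = edgeFlow pathE fbar e := by linarith
      rw [this]
    · linarith
  have hcv_eq : ∀ v, cv v (nodeFlow pathV f v) = cv v (nodeFlow pathV fbar v) := by
    intro v
    have h0 : (nodeFlow pathV f v - nodeFlow pathV fbar v)
        * (cv v (nodeFlow pathV f v) - cv v (nodeFlow pathV fbar v)) = 0 :=
      (Finset.sum_eq_zero_iff_of_nonneg (fun v _ => hterm_v v)).mp hsum_v0 v (Finset.mem_univ v)
    rcases mul_eq_zero.mp h0 with h | h
    · have : nodeFlow pathV f v = nodeFlow pathV fbar v := by linarith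
      rw [this]
    · linarith
  -- path costs coincide
  have hcp_eq : ∀ p, cp p = cpb p := by
    intro p
    simp only [hcp, hcpb, pathCost]
    congr 1
    · exact Finset.sum_congr rfl fun e _ => hce_eq e
    · exact Finset.sum_congr rfl fun v _ => by rw [hcv_eq v]
  -- conclude m = mb
  obtain ⟨p0, hp0⟩ : ∃ p, 0 < f p := by
    by_contra h
    push_neg at h
    have hz : ∀ p, f p = 0 := fun p => le_antisymm (h p) (hf.1 p)
    have : (1:ℝ) = 0 := by rw [← hf.2]; simp [hz]
    norm_num at this
  obtain ⟨q0, hq0⟩ : ∃ p, 0 < fbar p := by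
    by_contra h
    push_neg at h
    have hz : ∀ p, fbar p = 0 := fun p => le_antisymm (h p) (hfbar.1 p)
    have : (1:ℝ) = 0 := by rw [← hfbar.2]; simp [hz]
    norm_num at this
  have hmmb : m = mb := by
    have h1 : m ≤ mb := by
      have := hmb_used q0 hq0
      have := hm_le q0
      rw [← hcp_eq q0] at *
      linarith
    have h2 : mb ≤ m := by
      have := hm_used p0 hp0
      have := hmb_le p0
      rw [hcp_eq p0] at *
      linarith
    linarith
  rw [hm_C, hmb_C, hmmb]

end RoutingGame
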